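/- arXiv:2102.05261 — 4 statements merged into one kernel-verified Lean document; each statement's English description precedes it below -/
import Mathlib

section
/- For all positive real numbers a and b with b > a, the infinite series identity a/(b-a) = \sum_{i=1}^{\infty} \prod_{j=1}^{i} (a+j-1)/(b+j) holds. -/
open Finset Filter Real

/-- For all positive reals `a < b`,
`a/(b-a) = ∑_{i=1}^∞ ∏_{j=1}^i (a+j-1)/(b+j)`. -/
theorem stmt_0 (a b : ℝ) (ha : 0 < a) (hab : a < b) :
    a / (b - a) =
      ∑' i : ℕ, ∏ j ∈ Finset.Icc 1 (i + 1), (a + (j : ℝ) - 1) / (b + (j : ℝ)) := by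
  have hb : 0 < b := ha.trans hab
  have hba : 0 < b - a := sub_pos.mpr hab
  set R : ℕ → ℝ := fun n => ∏ j ∈ Finset.Icc 1 n, (a + (j : ℝ) - 1) / (b + (j : ℝ) - 1)
    with hRdef
  set P : ℕ → ℝ := fun n => ∏ j ∈ Finset.Icc 1 n, (a + (j : ℝ) - 1) / (b + (j : ℝ))
    with hPdef
  have hbn : ∀ n : ℕ, (0:ℝ) < b + n := fun n => by positivity
  have hRpos : ∀ n, 0 < R n := by
    intro n
    apply Finset.prod_pos
    intro j hj
    have hj1 : (1:ℝ) ≤ j := by exact_mod_cast (Finset.mem_Icc.mp hj).1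
    apply div_pos <;> linarith
  have hPnonneg : ∀ n, 0 ≤ P n := by
    intro n
    apply Finset.prod_nonneg
    intro j hj
    have hj1 : (1:ℝ) ≤ j := by exact_mod_cast (Finset.mem_Icc.mp hj).1
    apply div_nonneg <;> linarith
  -- recurrence for R
  have hrec : ∀ n : ℕ, R (n+1) = R n * ((a + n) / (b + n)) := by
    intro n
    rw [hRdef]
    simp only
    rw [Finset.prod_Icc_succ_top (Nat.le_add_left 1 n)]
    push_cast
    ring
  -- P n = R n * b / (b + n)
  have hPrec : ∀ n : ℕ, P (n+1) = P n * ((a + n) / (b + n + 1)) := by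
    intro n
    rw [hPdef]
    simp only
    rw [Finset.prod_Icc_succ_top (Nat.le_add_left 1 n)]
    push_cast
    ring
  have hPR : ∀ n : ℕ, P n = R n * (b / (b + n)) := by
    intro n
    induction n with
    | zero => simp [hPdef, hRdef, hb.ne']
    | succ n ih =>
      rw [hPrec n, ih, hrec n]
      have h1 := (hbn n).ne'
      have h2 : (b + (n:ℝ) + 1) ≠ 0 := by have := hbn (n+1); push_cast at this; linarith
      push_cast
      field_simp
      ring
  -- telescoping form of each term
  have hterm : ∀ n : ℕ, P n = b / (b - a) * (R n - R (n+1)) := by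
    intro n
    rw [hPR n, hrec n]
    have h1 := (hbn n).ne'
    field_simp
    ring
  -- partial sums
  have key : ∀ N : ℕ, ∑ i ∈ Finset.range N, P (i+1) = b / (b - a) * (R 1 - R (N+1)) := by
    intro N
    calc ∑ i ∈ Finset.range N, P (i+1)
        = ∑ i ∈ Finset.range N, b / (b - a) * (R (i+1) - R (i+2)) := by
          exact Finset.sum_congr rfl fun i _ => hterm (i+1)
      _ = b / (b - a) * ∑ i ∈ Finset.range N, ((fun k => R (k+1)) i - (fun k => R (k+1)) (i+1)) := by
          rw [Finset.mul_sum]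
      _ = b / (b - a) * (R 1 - R (N+1)) := by
          rw [Finset.sum_range_sub' (fun k => R (k+1)) N]
  -- R tends to 0
  have hRle : ∀ n : ℕ, R n ≤ Real.exp (-(b - a) * ∑ j ∈ Finset.Icc 1 n, 1 / (b + j - 1)) := by
    intro n
    have hle : ∀ j ∈ Finset.Icc 1 n,
        (a + (j:ℝ) - 1) / (b + (j:ℝ) - 1) ≤ Real.exp (-((b - a) / (b + j - 1))) := by
      intro j hj
      have hj1 : (1:ℝ) ≤ j := by exact_mod_cast (Finset.mem_Icc.mp hj).1
      have hd : (0:ℝ) < b + j - 1 := by linarith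
      have hx : (a + (j:ℝ) - 1) / (b + (j:ℝ) - 1) = 1 - (b - a) / (b + j - 1) := by
        field_simp
        ring
      rw [hx]
      have := Real.add_one_le_exp (-((b - a) / (b + j - 1)))
      linarith
    calc R n ≤ ∏ j ∈ Finset.Icc 1 n, Real.exp (-((b - a) / (b + (j:ℝ) - 1))) := by
          apply Finset.prod_le_prod
          · intro j hj
            have hj1 : (1:ℝ) ≤ j := by exact_mod_cast (Finset.mem_Icc.mp hj).1
            apply div_nonneg <;> linarith
          · exact hle
      _ = Real.exp (∑ j ∈ Finset.Icc 1 n, -((b - a) / (b + (j:ℝ) - 1))) := (Real.exp_sum _ _).symm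
      _ = Real.exp (-(b - a) * ∑ j ∈ Finset.Icc 1 n, 1 / (b + j - 1)) := by
          congr 1
          rw [Finset.mul_sum]
          exact Finset.sum_congr rfl fun j _ => by ring
  have hSbig : Tendsto (fun n : ℕ => ∑ j ∈ Finset.Icc 1 n, 1 / (b + (j:ℝ) - 1)) atTop atTop := by
    have hH : Tendsto (fun n : ℕ => ∑ i ∈ Finset.range n, 1 / ((i:ℝ) + 1)) atTop atTop :=
      Real.tendsto_sum_range_one_div_nat_succ_atTop
    have hH' : Tendsto (fun n : ℕ => (1 / (b+1)) * ∑ i ∈ Finset.range n, 1 / ((i:ℝ) + 1))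
        atTop atTop := hH.const_mul_atTop (by positivity)
    apply tendsto_atTop_mono _ hH'
    intro (n : ℕ)
    rw [Finset.mul_sum]
    have hicc : ∀ m : ℕ, ∑ j ∈ Finset.Icc 1 m, 1 / (b + (j:ℝ) - 1)
        = ∑ i ∈ Finset.range m, 1 / (b + ((i:ℝ) + 1) - 1) := by
      intro m
      induction m with
      | zero => simp
      | succ m ih =>
        rw [Finset.sum_Icc_succ_top (Nat.le_add_left 1 m), Finset.sum_range_succ, ih]
        push_cast
        ring_nf
    rw [hicc n]
    apply Finset.sum_le_sum
    intro i _
    have hi : (0:ℝ) ≤ i := Nat.cast_nonneg i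
    rw [one_div_mul_one_div]
    apply one_div_le_one_div_of_le (by linarith)
    nlinarith
  have hR0 : Tendsto R atTop (nhds 0) := by
    apply squeeze_zero (fun n => (hRpos n).le) hRle
    have h1 : Tendsto (fun n : ℕ => (b - a) * ∑ j ∈ Finset.Icc 1 n, 1 / (b + (j:ℝ) - 1))
        atTop atTop := hSbig.const_mul_atTop hba
    have h2 : Tendsto (fun n : ℕ => -(b - a) * ∑ j ∈ Finset.Icc 1 n, 1 / (b + (j:ℝ) - 1))
        atTop atBot := by
      simp only [neg_mul]
      exact tendsto_neg_atBot_iff.mpr h1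
    exact Real.tendsto_exp_atBot.comp h2
  -- conclude
  have hR1 : R 1 = a / b := by
    rw [hRdef]
    norm_num
  have hsum : HasSum (fun i : ℕ => P (i+1)) (a / (b - a)) := by
    rw [hasSum_iff_tendsto_nat_of_nonneg (fun i => hPnonneg (i+1))]
    simp only [key]
    have hlim : Tendsto (fun N : ℕ => b / (b - a) * (R 1 - R (N+1))) atTop
        (nhds (b / (b - a) * (R 1 - 0))) := by
      apply Tendsto.const_mul
      exact tendsto_const_nhds.sub (hR0.comp (tendsto_add_atTop_nat 1))
    convert hlim using 2
    rw [hR1]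
    field_simp
    ring
  exact hsum.tsum_eq.symm
end

section
/- Let H > 1 be a real number, define step sizes \alpha_\ell = (H+1)/(H+\ell) for \ell \geq 1, and for 1 \leq i \leq k define \alpha_k^i = \alpha_i \prod_{\ell=i+1}^{k} (1 - \alpha_\ell). Then for every i \geq 1, \sum_{k=i}^{\infty} \alpha_k^i = (H+1)/H. -/
/-- With `H > 1`, step sizes `α_ℓ = (H+1)/(H+ℓ)`, and
`α_k^i = α_i ∏_{ℓ=i+1}^k (1-α_ℓ)`, for every `i ≥ 1` we have
`∑_{k=i}^∞ α_k^i = (H+1)/H`. -/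
theorem stmt_3 (H : ℝ) (hH : 1 < H) (i : ℕ) (hi : 1 ≤ i) :
    ∑' n : ℕ,
        ((H + 1) / (H + (i : ℝ)) *
          ∏ ℓ ∈ Finset.Icc (i + 1) (i + n), (1 - (H + 1) / (H + (ℓ : ℝ))))
      = (H + 1) / H := by
  have hH0 : (0:ℝ) < H := by linarith
  have hi1 : (1:ℝ) ≤ (i:ℝ) := by exact_mod_cast hi
  have hHi : (0:ℝ) < H + i := by linarith
  set P : ℕ → ℝ := fun n => ∏ ℓ ∈ Finset.Icc (i + 1) (i + n), (1 - (H + 1) / (H + (ℓ : ℝ))) with hP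
  set A : ℕ → ℝ := fun n => (H + 1) / (H * (H + i)) * ((H + i + n) * P n) with hA
  -- each factor nonneg
  have hfac : ∀ ℓ : ℕ, 1 ≤ ℓ → 0 ≤ 1 - (H + 1) / (H + (ℓ:ℝ)) := by
    intro ℓ hℓ
    have hℓ1 : (1:ℝ) ≤ (ℓ:ℝ) := by exact_mod_cast hℓ
    have h1 : (0:ℝ) < H + ℓ := by linarith
    have : (H + 1) / (H + (ℓ:ℝ)) ≤ 1 := by
      rw [div_le_one h1]; linarith
    linarith
  have hPnonneg : ∀ n, 0 ≤ P n := by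
    intro n
    apply Finset.prod_nonneg
    intro ℓ hℓ
    exact hfac ℓ (le_trans (by omega) (Finset.mem_Icc.mp hℓ).1)
  -- recurrence for P
  have hPrec : ∀ n, P (n+1) = P n * (((i:ℝ) + n) / (H + i + n + 1)) := by
    intro n
    have h1 : i + (n+1) = (i + n) + 1 := rfl
    have h2 : i + 1 ≤ (i + n) + 1 := by omega
    rw [hP]
    simp only [h1]
    rw [Finset.prod_Icc_succ_top h2]
    congr 1
    have hc : ((i + n + 1 : ℕ) : ℝ) = (i:ℝ) + n + 1 := by push_cast (config := {}); ring
    rw [hc]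
    have hpos : (0:ℝ) < H + ((i:ℝ) + n + 1) := by positivity
    rw [show H + ((i:ℝ) + n + 1) = H + (i:ℝ) + n + 1 from by ring,
      eq_div_iff (by positivity : (H + (i:ℝ) + n + 1) ≠ 0), sub_mul, one_mul,
      div_mul_cancel₀ _ (by positivity : (H + (i:ℝ) + n + 1) ≠ 0)]
    ring
  have hApos : ∀ n, 0 ≤ A n := by
    intro n
    have : (0:ℝ) ≤ (H + 1) / (H * (H + i)) := by positivity
    have h2 : (0:ℝ) ≤ H + i + n := by positivity
    exact mul_nonneg this (mul_nonneg h2 (hPnonneg n))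
  -- A recurrence
  have hArec : ∀ n, A (n+1) = A n * (((i:ℝ) + n) / (H + i + n)) := by
    intro n
    rw [hA]
    simp only [hPrec n]
    have h1 : (0:ℝ) < H + i + n := by positivity
    have h2 : (0:ℝ) < H + i + n + 1 := by positivity
    push_cast
    field_simp
    ring
  -- telescoping
  have ht : ∀ n, (H + 1) / (H + (i:ℝ)) * P n = A n - A (n+1) := by
    intro n
    rw [hArec n, hA]
    have h1 : (0:ℝ) < H + i + n := by positivity
    field_simp
    ring
  -- bound
  have hbound : ∀ n, A n ≤ (H + 1) / H * ((i:ℝ) / (i + n)) := by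
    intro n
    induction n with
    | zero =>
      have : A 0 = (H + 1) / H := by
        rw [hA]
        simp [hP]
        field_simp
      rw [this]
      have hi0 : (0:ℝ) < i := by linarith
      simp [div_self (ne_of_gt hi0)]
    | succ n ih =>
      rw [hArec n]
      have h1 : (0:ℝ) < H + i + n := by positivity
      have h2 : (0:ℝ) ≤ ((i:ℝ) + n) / (H + i + n) := by positivity
      calc A n * (((i:ℝ) + n) / (H + i + n))
          ≤ (H + 1) / H * ((i:ℝ) / (i + n)) * (((i:ℝ) + n) / (H + i + n)) := by
            exact mul_le_mul_of_nonneg_right ih h2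
        _ = (H + 1) / H * ((i:ℝ) / (H + i + n)) := by
            have hin : (0:ℝ) < (i:ℝ) + n := by positivity
            field_simp
        _ ≤ (H + 1) / H * ((i:ℝ) / (i + (n+1))) := by
            apply mul_le_mul_of_nonneg_left _ (by positivity)
            apply div_le_div_of_nonneg_left (by positivity) (by positivity)
            linarith
        _ = (H + 1) / H * ((i:ℝ) / (i + ((n:ℕ)+1 : ℕ))) := by push_cast (config := {}); ring
  -- A → 0
  have hA0 : Filter.Tendsto A Filter.atTop (nhds 0) := by
    have hg : Filter.Tendsto (fun n : ℕ => (H + 1) / H * ((i:ℝ) / (i + n))) Filter.atTop (nhds 0) := by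
      have h1 : Filter.Tendsto (fun n : ℕ => (i:ℝ) + n) Filter.atTop Filter.atTop :=
        Filter.tendsto_atTop_add_const_left _ _ tendsto_natCast_atTop_atTop
      have h2 := h1.inv_tendsto_atTop
      have := h2.const_mul ((H + 1) / H * (i:ℝ))
      simpa [div_eq_mul_inv, mul_assoc, mul_comm, mul_left_comm] using this
    exact squeeze_zero hApos hbound hg
  -- conclude
  have hsum : HasSum (fun n => (H + 1) / (H + (i:ℝ)) * P n) ((H+1)/H) := by
    rw [hasSum_iff_tendsto_nat_of_nonneg]
    · have : ∀ n, ∑ k ∈ Finset.range n, ((H + 1) / (H + (i:ℝ)) * P k) = A 0 - A n := by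
        intro n
        rw [← Finset.sum_range_sub' A n]
        exact Finset.sum_congr rfl fun k _ => ht k
      simp only [this]
      have hA0' : A 0 = (H + 1) / H := by
        rw [hA]; simp [hP]; field_simp
      rw [← hA0']
      simpa using (tendsto_const_nhds.sub hA0)
    · intro n
      exact mul_nonneg (by positivity) (hPnonneg n)
  exact hsum.tsum_eq
end

section
/- Let \gamma \in [0,1), let (r_\ell)_{\ell \geq 0} be a real sequence, and let \lambda and \tau \geq 0 be reals such that |\sum_{k=0}^{\ell} (r_k - \lambda)| \leq \tau for every \ell \geq 0. If additionally the sequence (r_\ell) is bounded so that the discounted sum converges, then |\sum_{\ell=0}^{\infty} \gamma^{\ell} r_\ell - \lambda/(1-\gamma)| \leq \tau. -/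
/-- If all partial sums of `r_k - λ` are bounded in magnitude by `τ`, and the
sequence `r` is bounded, then the discounted sum deviates from `λ/(1-γ)` by at
most `τ`. -/
theorem stmt_5 (γ : ℝ) (hγ0 : 0 ≤ γ) (hγ1 : γ < 1)
    (r : ℕ → ℝ) (lam τ C : ℝ) (hτ : 0 ≤ τ)
    (hpartial : ∀ ℓ : ℕ, |∑ k ∈ Finset.range (ℓ + 1), (r k - lam)| ≤ τ)
    (hbdd : ∀ ℓ : ℕ, |r ℓ| ≤ C) :
    |(∑' ℓ : ℕ, γ ^ ℓ * r ℓ) - lam / (1 - γ)| ≤ τ := by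
  have hγabs : |γ| < 1 := by rwa [abs_of_nonneg hγ0]
  have hgeo : Summable (fun ℓ : ℕ => γ ^ ℓ) := summable_geometric_of_lt_one hγ0 hγ1
  set x : ℕ → ℝ := fun k => r k - lam with hx
  set S : ℕ → ℝ := fun ℓ => ∑ k ∈ Finset.range (ℓ + 1), x k with hS
  have hSle : ∀ ℓ, |S ℓ| ≤ τ := hpartial
  -- f ℓ = γ^ℓ S ℓ
  set f : ℕ → ℝ := fun ℓ => γ ^ ℓ * S ℓ with hf
  have hpow : ∀ ℓ : ℕ, |γ ^ ℓ| = γ ^ ℓ := fun ℓ => abs_of_nonneg (pow_nonneg hγ0 ℓ)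
  have hfs : Summable f := by
    apply Summable.of_norm_bounded (g := fun ℓ => γ ^ ℓ * τ) (hgeo.mul_right τ)
    intro ℓ
    simp only [Real.norm_eq_abs, hf, abs_mul, hpow]
    exact mul_le_mul_of_nonneg_left (hSle ℓ) (pow_nonneg hγ0 ℓ)
  have hxb : ∀ ℓ, |x ℓ| ≤ 2 * τ := by
    intro ℓ
    cases ℓ with
    | zero =>
        have h0 := hSle 0
        have : S 0 = x 0 := by simp [hS]
        rw [this] at h0
        linarith
    | succ n =>
        have h1 := hSle (n + 1)
        have h2 := hSle n
        have : x (n + 1) = S (n + 1) - S n := by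
          simp [hS, Finset.sum_range_succ]
        rw [this]
        calc |S (n+1) - S n| ≤ |S (n+1)| + |S n| := abs_sub _ _
          _ ≤ 2 * τ := by linarith
  have hgs : Summable (fun ℓ : ℕ => γ ^ ℓ * x ℓ) := by
    apply Summable.of_norm_bounded (g := fun ℓ => γ ^ ℓ * (2 * τ)) (hgeo.mul_right _)
    intro ℓ
    simp only [Real.norm_eq_abs, abs_mul, hpow]
    exact mul_le_mul_of_nonneg_left (hxb ℓ) (pow_nonneg hγ0 ℓ)
  have hrs : Summable (fun ℓ : ℕ => γ ^ ℓ * r ℓ) := by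
    apply Summable.of_norm_bounded (g := fun ℓ => γ ^ ℓ * |C|) (hgeo.mul_right _)
    intro ℓ
    simp only [Real.norm_eq_abs, abs_mul, hpow]
    exact mul_le_mul_of_nonneg_left ((hbdd ℓ).trans (le_abs_self C)) (pow_nonneg hγ0 ℓ)
  have hls : Summable (fun ℓ : ℕ => γ ^ ℓ * lam) := hgeo.mul_right _
  have hγne : (1 : ℝ) - γ ≠ 0 := by linarith
  have hsumgeo : ∑' ℓ : ℕ, γ ^ ℓ * lam = lam / (1 - γ) := by
    rw [tsum_mul_right, tsum_geometric_of_lt_one hγ0 hγ1]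
    field_simp
  have hsplit : (∑' ℓ : ℕ, γ ^ ℓ * r ℓ) - lam / (1 - γ)
      = ∑' ℓ : ℕ, γ ^ ℓ * x ℓ := by
    rw [← hsumgeo, ← Summable.tsum_sub hrs hls]
    apply tsum_congr
    intro ℓ
    simp [hx, mul_sub]
  -- Abel identity: ∑' γ^ℓ x ℓ = (1-γ) * ∑' f
  have habel : (∑' ℓ : ℕ, γ ^ ℓ * x ℓ) = (1 - γ) * ∑' ℓ, f ℓ := by
    have hshift : (∑' ℓ : ℕ, γ ^ ℓ * x ℓ)
        = x 0 + ∑' ℓ : ℕ, (f (ℓ + 1) - γ * f ℓ) := by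
      rw [Summable.tsum_eq_zero_add hgs]
      simp only [pow_zero, one_mul]
      congr 1
      apply tsum_congr
      intro ℓ
      have hx1 : x (ℓ + 1) = S (ℓ + 1) - S ℓ := by
        simp [hS, Finset.sum_range_succ]
      simp only [hf, hx1]
      ring
    have hfs1 : Summable (fun ℓ => f (ℓ + 1)) := by
      exact (summable_nat_add_iff 1).mpr hfs
    have h2 : (∑' ℓ : ℕ, (f (ℓ + 1) - γ * f ℓ))
        = (∑' ℓ : ℕ, f (ℓ + 1)) - γ * ∑' ℓ, f ℓ := by
      rw [Summable.tsum_sub hfs1 (hfs.mul_left γ), tsum_mul_left]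
    have h3 : (∑' ℓ : ℕ, f (ℓ + 1)) = (∑' ℓ, f ℓ) - f 0 := by
      have := Summable.tsum_eq_zero_add hfs
      linarith [this]
    have hf0 : f 0 = x 0 := by simp [hf, hS]
    rw [hshift, h2, h3, hf0]
    ring
  rw [hsplit, habel]
  have hbound : |∑' ℓ, f ℓ| ≤ τ / (1 - γ) := by
    have h1 : |∑' ℓ, f ℓ| ≤ ∑' ℓ : ℕ, γ ^ ℓ * τ := by
      rw [← Real.norm_eq_abs]
      apply (norm_tsum_le_tsum_norm ?_).trans
      · apply Summable.tsum_le_tsum _ ?_ (hgeo.mul_right τ)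
        · intro ℓ
          simp only [Real.norm_eq_abs, hf, abs_mul, hpow]
          exact mul_le_mul_of_nonneg_left (hSle ℓ) (pow_nonneg hγ0 ℓ)
        · exact hfs.norm
      · exact hfs.norm
    rw [tsum_mul_right, tsum_geometric_of_lt_one hγ0 hγ1] at h1
    calc |∑' ℓ, f ℓ| ≤ (1 - γ)⁻¹ * τ := h1
      _ = τ / (1 - γ) := by field_simp
  rw [abs_mul, abs_of_nonneg (by linarith : (0:ℝ) ≤ 1 - γ)]
  calc (1 - γ) * |∑' ℓ, f ℓ| ≤ (1 - γ) * (τ / (1 - γ)) :=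
        mul_le_mul_of_nonneg_left hbound (by linarith)
    _ = τ := by field_simp
end

section
/- Let a and S be positive integers, b \geq 0 an integer, \zeta \in (0,1), and f : \mathbb{Z}_{>0} \to \mathbb{R} satisfy f(x) \leq x^{\zeta} for all x. Define t_j = a \cdot 2^{b+j} for j \geq 0, and let k be the minimal index with t_0 + t_1 + \cdots + t_k \geq S. If k \geq 1, then f(t_0) + f(t_1) + \cdots + f(t_k) \leq (2^{2\zeta}/(2^{\zeta} - 1)) \cdot S^{\zeta}. -/
/-- Doubling trick: with `t_j = a·2^(b+j)`, `k ≥ 1` minimal such that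
`t_0 + ⋯ + t_k ≥ S`, and `f x ≤ x^ζ` on positive integers,
`∑_{j=0}^k f(t_j) ≤ (2^{2ζ}/(2^ζ - 1))·S^ζ`. -/
theorem stmt_6 (a S : ℕ) (ha : 0 < a) (hS : 0 < S) (b : ℕ)
    (ζ : ℝ) (hζ0 : 0 < ζ) (hζ1 : ζ < 1)
    (f : ℕ → ℝ) (hf : ∀ x : ℕ, 0 < x → f x ≤ (x : ℝ) ^ ζ)
    (t : ℕ → ℕ) (ht : ∀ j, t j = a * 2 ^ (b + j))
    (k : ℕ) (hk1 : 1 ≤ k)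
    (hk : S ≤ ∑ j ∈ Finset.range (k + 1), t j)
    (hkmin : ∑ j ∈ Finset.range k, t j < S) :
    (∑ j ∈ Finset.range (k + 1), f (t j))
      ≤ (2 : ℝ) ^ (2 * ζ) / ((2 : ℝ) ^ ζ - 1) * (S : ℝ) ^ ζ := by
  set q := (2:ℝ) ^ ζ with hqdef
  have hq1 : 1 < q := Real.one_lt_rpow_iff_of_pos two_pos |>.mpr (Or.inl ⟨one_lt_two, hζ0⟩)
  have hqpos : 0 < q := lt_trans one_pos hq1
  set c : ℕ := a * 2 ^ (b + (k-1)) with hcdef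
  have hcS : (c:ℝ) ≤ (S:ℝ) := by
    have h1 : t (k-1) ≤ ∑ j ∈ Finset.range k, t j :=
      Finset.single_le_sum (f := t) (fun i _ => Nat.zero_le _)
        (Finset.mem_range.mpr (by omega))
    have : c < S := by rw [hcdef, ← ht]; omega
    exact_mod_cast this.le
  have hcpos : 0 < c := by positivity
  have hcr : (0:ℝ) < (c:ℝ) := by exact_mod_cast hcpos
  have hpow : ∀ j : ℕ, ((2:ℝ)^j) ^ ζ = q ^ j := by
    intro j
    rw [← Real.rpow_natCast (2:ℝ) j, ← Real.rpow_mul (by norm_num), mul_comm,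
      Real.rpow_mul (by norm_num), Real.rpow_natCast]
  have hterm : ∀ j ∈ Finset.range (k+1), f (t j) ≤ (S:ℝ)^ζ / q^(k-1) * q^j := by
    intro j _
    have htj : (t j : ℝ) = (c:ℝ) * 2^j / 2^(k-1) := by
      rw [ht, hcdef]
      push_cast
      rw [pow_add, pow_add]
      field_simp
    have h1 : f (t j) ≤ (t j : ℝ) ^ ζ := hf _ (by rw [ht]; positivity)
    have h2 : ((t j : ℝ)) ^ ζ = (c:ℝ)^ζ * q^j / q^(k-1) := by
      rw [htj, Real.div_rpow (by positivity) (by positivity),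
        Real.mul_rpow (by positivity) (by positivity), hpow, hpow]
    have h3 : (c:ℝ)^ζ ≤ (S:ℝ)^ζ := Real.rpow_le_rpow hcr.le hcS hζ0.le
    calc f (t j) ≤ (c:ℝ)^ζ * q^j / q^(k-1) := by rw [← h2]; exact h1
      _ ≤ (S:ℝ)^ζ / q^(k-1) * q^j := by
          rw [div_mul_eq_mul_div, mul_div_assoc, mul_div_assoc]
          gcongr
  have hsum : (∑ j ∈ Finset.range (k + 1), f (t j))
      ≤ (S:ℝ)^ζ / q^(k-1) * ((q^(k+1) - 1)/(q - 1)) := by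
    calc (∑ j ∈ Finset.range (k + 1), f (t j))
        ≤ ∑ j ∈ Finset.range (k + 1), (S:ℝ)^ζ / q^(k-1) * q^j :=
          Finset.sum_le_sum hterm
      _ = (S:ℝ)^ζ / q^(k-1) * ∑ j ∈ Finset.range (k + 1), q^j := by
          rw [Finset.mul_sum]
      _ = (S:ℝ)^ζ / q^(k-1) * ((q^(k+1) - 1)/(q - 1)) := by
          rw [geom_sum_eq (ne_of_gt hq1)]
  have hq1' : (0:ℝ) < q - 1 := by linarith
  have hSp : (0:ℝ) < (S:ℝ)^ζ := Real.rpow_pos_of_pos (by exact_mod_cast hS) ζ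
  have hfin : (S:ℝ)^ζ / q^(k-1) * ((q^(k+1) - 1)/(q - 1))
      ≤ (2 : ℝ) ^ (2 * ζ) / (q - 1) * (S : ℝ) ^ ζ := by
    have hq2 : (2:ℝ) ^ (2 * ζ) = q^2 := by
      rw [mul_comm, Real.rpow_mul (by norm_num), hqdef]
      norm_num
    have hkk : q^(k+1) = q^(k-1) * q^2 := by
      rw [← pow_add]; congr 1; omega
    rw [hq2]
    have : (S:ℝ)^ζ / q^(k-1) * ((q^(k+1) - 1)/(q - 1))
        ≤ (S:ℝ)^ζ / q^(k-1) * (q^(k+1)/(q - 1)) := by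
      gcongr
      linarith
    refine this.trans (le_of_eq ?_)
    rw [hkk]
    field_simp
  exact hsum.trans hfin
end
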